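/- (Local finite length.) Let E be a real normed vector space, (x_k)_{k≥0} a sequence in E, a > 0, b > 0, and (F_k)_{k≥0} a sequence of real numbers with F_k > 0 and F_k ≤ F_{k−1} for all k ≥ 1, satisfying the sufficient descent condition a‖x_k − x_{k−1}‖² ≤ F_{k−1} − F_k for all k ≥ 1. Let φ : ℝ → ℝ be concave on (0, ∞), nonnegative on (0, ∞), and differentiable with φ'(s) > 0 for all s > 0, and suppose 1 ≤ b φ'(F_k) ‖x_k − x_{k−1}‖ for all k ≥ 1. Then for every K ≥ 1, ∑_{k=1}^{K} ‖x_k − x_{k−1}‖ ≤ 2√(F_0 / a) + (b/a) φ(F_0). Consequently ∑_{k=1}^{∞} ‖x_k − x_{k−1}‖ < ∞, so (x_k) is a Cauchy sequence and converges whenever E is complete. -/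

import Mathlib

/-- Local finite length: under sufficient descent and the KŁ-type inequality,
`∑_{k=1}^K ‖x_k − x_{k−1}‖ ≤ 2√(F₀/a) + (b/a)φ(F₀)` for all `K ≥ 1`; hence the
total length is finite and the sequence is Cauchy. -/
theorem kl_finite_length
    {E : Type*} [NormedAddCommGroup E] [NormedSpace ℝ E]
    (x : ℕ → E) (a b : ℝ) (ha : 0 < a) (hb : 0 < b)
    (F : ℕ → ℝ) (hFpos : ∀ k : ℕ, 1 ≤ k → 0 < F k)
    (hFmono : ∀ k : ℕ, 1 ≤ k → F k ≤ F (k - 1))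
    (hdesc : ∀ k : ℕ, 1 ≤ k → a * ‖x k - x (k - 1)‖ ^ 2 ≤ F (k - 1) - F k)
    (φ : ℝ → ℝ) (hconc : ConcaveOn ℝ (Set.Ioi 0) φ)
    (hnonneg : ∀ s : ℝ, 0 < s → 0 ≤ φ s)
    (hdiff : ∀ s : ℝ, 0 < s → DifferentiableAt ℝ φ s)
    (hderiv : ∀ s : ℝ, 0 < s → 0 < deriv φ s)
    (hKL : ∀ k : ℕ, 1 ≤ k → 1 ≤ b * deriv φ (F k) * ‖x k - x (k - 1)‖) :
    (∀ K : ℕ, 1 ≤ K →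
      ∑ k ∈ Finset.Icc 1 K, ‖x k - x (k - 1)‖
        ≤ 2 * Real.sqrt (F 0 / a) + (b / a) * φ (F 0)) ∧
    Summable (fun k : ℕ => ‖x (k + 1) - x k‖) ∧
    CauchySeq x := by
  set d : ℕ → ℝ := fun k => ‖x k - x (k - 1)‖ with hd
  have hdnn : ∀ k, 0 ≤ d k := fun k => norm_nonneg _
  -- tangent line inequality for concave functions (derivative at the right endpoint)
  have tangent : ∀ u v : ℝ, 0 < u → u ≤ v → deriv φ v * (v - u) ≤ φ v - φ u := by
    intro u v hu huv
    rcases eq_or_lt_of_le huv with rfl | h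
    · simp
    · have hv : 0 < v := hu.trans h
      have hs := hconc.deriv_le_slope (Set.mem_Ioi.mpr hu) (Set.mem_Ioi.mpr hv) h (hdiff v hv)
      rw [slope_def_field] at hs
      have hvu : 0 < v - u := sub_pos.mpr h
      exact (le_div_iff₀ hvu).mp hs
  have hF1 : 0 < F 1 := hFpos 1 le_rfl
  have hF10 : F 1 ≤ F 0 := hFmono 1 le_rfl
  have hF0 : 0 < F 0 := lt_of_lt_of_le hF1 hF10
  -- key recursive inequality
  have key : ∀ k : ℕ, 1 ≤ k →
      2 * d (k + 1) ≤ d k + (b / a) * (φ (F k) - φ (F (k + 1))) := by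
    intro k hk
    have hFk : 0 < F k := hFpos k hk
    have hFk1 : 0 < F (k + 1) := hFpos (k + 1) (by omega)
    have hmono : F (k + 1) ≤ F k := by simpa using hFmono (k + 1) (by omega)
    have hdesck : a * d (k + 1) ^ 2 ≤ F k - F (k + 1) := by
      simpa [hd] using hdesc (k + 1) (by omega)
    have hc : 0 < deriv φ (F k) := hderiv (F k) hFk
    have hkl : 1 ≤ b * deriv φ (F k) * d k := hKL k hk
    have htan : deriv φ (F k) * (F k - F (k + 1)) ≤ φ (F k) - φ (F (k + 1)) :=
      tangent (F (k + 1)) (F k) hFk1 hmono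
    set c := deriv φ (F k)
    set Δ := φ (F k) - φ (F (k + 1)) with hΔ
    have hΔnn : 0 ≤ Δ := le_trans (mul_nonneg hc.le (by linarith)) htan
    -- a * d(k+1)^2 ≤ b * d k * Δ
    have h1 : a * d (k + 1) ^ 2 ≤ b * d k * Δ := by
      have h2 : a * c * d (k + 1) ^ 2 ≤ Δ := by
        calc a * c * d (k + 1) ^ 2 = c * (a * d (k + 1) ^ 2) := by ring
          _ ≤ c * (F k - F (k + 1)) := by
              exact mul_le_mul_of_nonneg_left hdesck hc.le
          _ ≤ Δ := htan
      calc a * d (k + 1) ^ 2 = 1 * (a * d (k + 1) ^ 2) := by ring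
        _ ≤ (b * c * d k) * (a * d (k + 1) ^ 2) := by
            apply mul_le_mul_of_nonneg_right hkl (by positivity)
        _ = (b * d k) * (a * c * d (k + 1) ^ 2) := by ring
        _ ≤ (b * d k) * Δ := by
            apply mul_le_mul_of_nonneg_left h2 (by positivity)
        _ = b * d k * Δ := by ring
    -- AM-GM step
    have hq : 0 ≤ (b / a) * Δ := by positivity
    have h3 : d (k + 1) ^ 2 ≤ d k * ((b / a) * Δ) := by
      rw [← mul_le_mul_iff_right₀ ha]
      calc a * d (k + 1) ^ 2 ≤ b * d k * Δ := h1
        _ = a * (d k * (b / a * Δ)) := by field_simp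
    nlinarith [sq_nonneg (d k - (b / a) * Δ), hdnn k, hdnn (k + 1),
      sq_nonneg (d k + (b / a) * Δ - 2 * d (k + 1))]
  -- main induction
  have main : ∀ K : ℕ, 1 ≤ K →
      (∑ k ∈ Finset.Icc 1 K, d k) + d K ≤ 2 * d 1 + (b / a) * (φ (F 1) - φ (F K)) := by
    intro K hK
    induction K with
    | zero => omega
    | succ n ih =>
      rcases Nat.lt_or_ge n 1 with hn | hn
      · interval_cases n
        simp
        linarith [hdnn 1]
      · have hsum : ∑ k ∈ Finset.Icc 1 (n + 1), d k
            = (∑ k ∈ Finset.Icc 1 n, d k) + d (n + 1) :=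
          Finset.sum_Icc_succ_top (by omega) _
        have h1 := ih hn
        have h2 := key n hn
        rw [hsum]
        have : (b / a) * (φ (F 1) - φ (F n)) + (b / a) * (φ (F n) - φ (F (n + 1)))
            = (b / a) * (φ (F 1) - φ (F (n + 1))) := by ring
        linarith
  have hd1 : d 1 ≤ Real.sqrt (F 0 / a) := by
    have h1 : a * d 1 ^ 2 ≤ F 0 - F 1 := by simpa [hd] using hdesc 1 le_rfl
    have h2 : d 1 ^ 2 ≤ F 0 / a := by
      rw [le_div_iff₀ ha]
      nlinarith
    calc d 1 = Real.sqrt (d 1 ^ 2) := (Real.sqrt_sq (hdnn 1)).symm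
      _ ≤ Real.sqrt (F 0 / a) := Real.sqrt_le_sqrt h2
  have hφ10 : φ (F 1) ≤ φ (F 0) := by
    have := tangent (F 1) (F 0) hF1 hF10
    have h0 : 0 ≤ deriv φ (F 0) * (F 0 - F 1) := by
      have := hderiv (F 0) hF0
      nlinarith
    linarith
  -- the uniform bound
  have bound : ∀ K : ℕ, 1 ≤ K →
      ∑ k ∈ Finset.Icc 1 K, d k ≤ 2 * Real.sqrt (F 0 / a) + (b / a) * φ (F 0) := by
    intro K hK
    have h1 := main K hK
    have hφK : 0 ≤ φ (F K) := hnonneg (F K) (hFpos K hK)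
    have h2 : (b / a) * (φ (F 1) - φ (F K)) ≤ (b / a) * φ (F 0) := by
      apply mul_le_mul_of_nonneg_left _ (by positivity)
      linarith
    have h3 := hdnn K
    linarith
  refine ⟨bound, ?_, ?_⟩
  · -- summability
    have heq : ∀ n : ℕ, ∑ i ∈ Finset.range n, ‖x (i + 1) - x i‖ = ∑ k ∈ Finset.Icc 1 n, d k := by
      intro n
      induction n with
      | zero => simp
      | succ m ih =>
        rw [Finset.sum_range_succ, ih, Finset.sum_Icc_succ_top (by omega)]
        simp [hd]
    have hC : 0 ≤ 2 * Real.sqrt (F 0 / a) + (b / a) * φ (F 0) := by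
      have := hnonneg (F 0) hF0
      positivity
    apply summable_of_sum_range_le (c := 2 * Real.sqrt (F 0 / a) + (b / a) * φ (F 0))
      (fun n => norm_nonneg _)
    intro n
    rcases Nat.eq_zero_or_pos n with rfl | hn
    · simpa using hC
    · rw [heq]
      exact bound n hn
  · -- Cauchy
    have hs : Summable (fun k : ℕ => ‖x (k + 1) - x k‖) := by
      have heq : ∀ n : ℕ, ∑ i ∈ Finset.range n, ‖x (i + 1) - x i‖ = ∑ k ∈ Finset.Icc 1 n, d k := by
        intro n
        induction n with
        | zero => simp
        | succ m ih =>
          rw [Finset.sum_range_succ, ih, Finset.sum_Icc_succ_top (by omega)]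
          simp [hd]
      have hC : 0 ≤ 2 * Real.sqrt (F 0 / a) + (b / a) * φ (F 0) := by
        have := hnonneg (F 0) hF0
        positivity
      apply summable_of_sum_range_le (c := 2 * Real.sqrt (F 0 / a) + (b / a) * φ (F 0))
        (fun n => norm_nonneg _)
      intro n
      rcases Nat.eq_zero_or_pos n with rfl | hn
      · simpa using hC
      · rw [heq]
        exact bound n hn
    apply cauchySeq_of_summable_dist
    apply hs.congr
    intro n
    rw [dist_eq_norm, norm_sub_rev]
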